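/- For every finite group G there exists a finite group H isoclinic to G such that |H| ≤ |G| and Z(H) ⊆ H' (the center of H is contained in its derived subgroup). -/

import Mathlib

open scoped commutatorElement

/-- Two groups `G` and `H` are isoclinic if there are isomorphisms
`φ : G/Z(G) ≃* H/Z(H)` and `ψ : G' ≃* H'` such that whenever `φ(g₁Z(G)) = h₁Z(H)` and
`φ(g₂Z(G)) = h₂Z(H)`, one has `ψ(⁅g₁,g₂⁆) = ⁅h₁,h₂⁆`. -/
def Isoclinic (G : Type*) [Group G] (H : Type*) [Group H] : Prop :=
  ∃ (φ : G ⧸ Subgroup.center G ≃* H ⧸ Subgroup.center H)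
    (ψ : ↥(commutator G) ≃* ↥(commutator H)),
    ∀ (g₁ g₂ : G) (h₁ h₂ : H),
      φ (g₁ : G ⧸ Subgroup.center G) = (h₁ : H ⧸ Subgroup.center H) →
      φ (g₂ : G ⧸ Subgroup.center G) = (h₂ : H ⧸ Subgroup.center H) →
      ∀ hmem : ⁅g₁, g₂⁆ ∈ commutator G,
        (ψ ⟨⁅g₁, g₂⁆, hmem⟩ : H) = ⁅h₁, h₂⁆

namespace IsoclinicAux

variable {G : Type*} [Group G]

lemma comm_central_right (a b z : G) (hz : z ∈ Subgroup.center G) : ⁅a, b * z⁆ = ⁅a, b⁆ := by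
  have h := Subgroup.mem_center_iff.mp hz
  calc a * (b * z) * a⁻¹ * (b * z)⁻¹
      = a * b * (z * a⁻¹ * z⁻¹) * b⁻¹ := by group
    _ = a * b * (a⁻¹ * z * z⁻¹) * b⁻¹ := by rw [← h a⁻¹]
    _ = ⁅a, b⁆ := by group

lemma comm_central_left (a b z : G) (hz : z ∈ Subgroup.center G) : ⁅a * z, b⁆ = ⁅a, b⁆ := by
  have h := Subgroup.mem_center_iff.mp hz
  calc a * z * b * (a * z)⁻¹ * b⁻¹
      = a * (z * b * z⁻¹) * a⁻¹ * b⁻¹ := by group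
    _ = a * (b * z * z⁻¹) * a⁻¹ * b⁻¹ := by rw [h b]
    _ = ⁅a, b⁆ := by group

lemma comm_central (a b z w : G) (hz : z ∈ Subgroup.center G) (hw : w ∈ Subgroup.center G) :
    ⁅a * z, b * w⁆ = ⁅a, b⁆ := by
  rw [comm_central_right _ _ _ hw, comm_central_left _ _ _ hz]

lemma map_center_eq {H : Type*} [Group H] (e : G ≃* H) :
    (Subgroup.center G).map e.toMonoidHom = Subgroup.center H := by
  ext h
  constructor
  · rintro ⟨g, hg, rfl⟩
    rw [Subgroup.mem_center_iff]
    intro k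
    obtain ⟨x, rfl⟩ := e.surjective k
    simp only [MulEquiv.coe_toMonoidHom, ← map_mul]
    rw [Subgroup.mem_center_iff.mp hg]
  · intro hh
    refine ⟨e.symm h, ?_, by simp⟩
    show e.symm h ∈ Subgroup.center G
    rw [Subgroup.mem_center_iff]
    intro g
    apply e.injective
    simp only [map_mul, MulEquiv.apply_symm_apply]
    exact (Subgroup.mem_center_iff.mp hh (e g))

lemma map_commutator_eq {H : Type*} [Group H] (e : G ≃* H) :
    (commutator G).map e.toMonoidHom = commutator H := by
  rw [commutator_def, Subgroup.map_commutator, commutator_def,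
    Subgroup.map_top_of_surjective _ e.surjective]

lemma isoclinic_of_mulEquiv {H : Type*} [Group H] (e : G ≃* H) : Isoclinic G H := by
  refine ⟨QuotientGroup.congr _ _ e (by rw [← MulEquiv.toMonoidHom_eq_coe]; exact map_center_eq e),
    (e.subgroupMap (commutator G)).trans (MulEquiv.subgroupCongr (map_commutator_eq e)), ?_⟩
  intro g₁ g₂ h₁ h₂ h1 h2 hmem
  rw [QuotientGroup.congr_mk] at h1 h2
  rw [QuotientGroup.eq] at h1 h2
  -- h1 : (e g₁)⁻¹ * h₁ ∈ center H
  have e1 : h₁ = e g₁ * ((e g₁)⁻¹ * h₁) := by group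
  have e2 : h₂ = e g₂ * ((e g₂)⁻¹ * h₂) := by group
  have : ((e.subgroupMap (commutator G)).trans (MulEquiv.subgroupCongr (map_commutator_eq e))
      ⟨⁅g₁, g₂⁆, hmem⟩ : H) = e ⁅g₁, g₂⁆ := rfl
  rw [this, map_commutatorElement]
  rw [e1, e2, comm_central _ _ _ _ h1 h2]

lemma isoclinic_trans {H K : Type*} [Group H] [Group K] (h1 : Isoclinic G H)
    (h2 : Isoclinic H K) : Isoclinic G K := by
  obtain ⟨φ₁, ψ₁, hc₁⟩ := h1
  obtain ⟨φ₂, ψ₂, hc₂⟩ := h2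
  refine ⟨φ₁.trans φ₂, ψ₁.trans ψ₂, ?_⟩
  intro g₁ g₂ k₁ k₂ e1 e2 hmem
  obtain ⟨m₁, hm₁⟩ := Quotient.exists_rep (φ₁ (g₁ : G ⧸ Subgroup.center G))
  obtain ⟨m₂, hm₂⟩ := Quotient.exists_rep (φ₁ (g₂ : G ⧸ Subgroup.center G))
  have hm₁' : φ₁ (g₁ : G ⧸ Subgroup.center G) = (m₁ : H ⧸ Subgroup.center H) := hm₁.symm
  have hm₂' : φ₁ (g₂ : G ⧸ Subgroup.center G) = (m₂ : H ⧸ Subgroup.center H) := hm₂.symm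
  have mem' : ⁅m₁, m₂⁆ ∈ commutator H :=
    Subgroup.commutator_mem_commutator (Subgroup.mem_top m₁) (Subgroup.mem_top m₂)
  have step1 : ψ₁ ⟨⁅g₁, g₂⁆, hmem⟩ = ⟨⁅m₁, m₂⁆, mem'⟩ :=
    Subtype.ext (hc₁ g₁ g₂ m₁ m₂ hm₁' hm₂' hmem)
  have e1' : φ₂ (m₁ : H ⧸ Subgroup.center H) = (k₁ : K ⧸ Subgroup.center K) := by
    rw [← hm₁']; exact e1
  have e2' : φ₂ (m₂ : H ⧸ Subgroup.center H) = (k₂ : K ⧸ Subgroup.center K) := by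
    rw [← hm₂']; exact e2
  have step2 := hc₂ m₁ m₂ k₁ k₂ e1' e2' mem'
  show (ψ₂ (ψ₁ ⟨⁅g₁, g₂⁆, hmem⟩) : K) = ⁅k₁, k₂⁆
  rw [step1]
  exact step2


universe u


theorem exists_resolution {A M : Type u} [AddCommGroup A] [AddCommGroup M] (ρ : A →+ M) :
    ∃ (D : Type u) (_ : AddCommGroup D) (f : A →+ D) (θ : D →+ M),
      Function.Injective f ∧ Function.Surjective θ ∧ (∀ a, θ (f a) = ρ a) ∧
      (∀ d, θ d = 0 → ∃ a, f a = d) := by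
  classical
  let E : Type u := CharacterModule A → AddCircle (1 : ℚ)
  let emb : A →+ E := AddMonoidHom.mk' (fun a c => c a)
    (fun a b => funext fun c => map_add c a b)
  have emb_inj : Function.Injective emb := by
    rw [injective_iff_map_eq_zero]
    intro a ha
    exact CharacterModule.eq_zero_of_character_apply fun c => congrFun ha c
  let S : AddSubgroup E := ρ.ker.map emb
  let X := E ⧸ S
  let mkX : E →+ X := QuotientAddGroup.mk' S
  have mkX_surj : Function.Surjective mkX := QuotientAddGroup.mk'_surjective S
  let l : A ⧸ ρ.ker →+ X := QuotientAddGroup.lift ρ.ker (mkX.comp emb) (by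
    intro a ha
    show (QuotientAddGroup.mk (emb a) : X) = 0
    rw [QuotientAddGroup.eq_zero_iff]
    exact AddSubgroup.mem_map_of_mem emb ha)
  let e₁ := QuotientAddGroup.quotientKerEquivRange ρ
  let v₀ : ρ.range →+ X := l.comp e₁.symm.toAddMonoidHom
  have key₀ : ∀ a : A, v₀ ⟨ρ a, AddMonoidHom.mem_range.mpr ⟨a, rfl⟩⟩ = mkX (emb a) := by
    intro a
    have h1 : e₁ ((QuotientAddGroup.mk a : A ⧸ ρ.ker)) = ⟨ρ a, AddMonoidHom.mem_range.mpr ⟨a, rfl⟩⟩ := by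
      rfl
    have h2 : e₁.symm ⟨ρ a, AddMonoidHom.mem_range.mpr ⟨a, rfl⟩⟩ = QuotientAddGroup.mk a := by
      rw [← h1, AddEquiv.symm_apply_apply]
    show l (e₁.symm ⟨ρ a, _⟩) = mkX (emb a)
    rw [h2]
    rfl
  haveI : DivisibleBy E ℕ := AddGroup.divisibleByNatOfDivisibleByInt E
  haveI : DivisibleBy X ℕ := QuotientAddGroup.divisibleBy S
  haveI : DivisibleBy X ℤ := AddGroup.divisibleByIntOfDivisibleByNat X
  have injX : Module.Injective ℤ X := (Module.Baer.of_divisible X).injective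
  let e₂ : ↥(AddSubgroup.toIntSubmodule ρ.range) →+ ↥ρ.range :=
    AddMonoidHom.mk' (fun x => ⟨x.1, x.2⟩) (fun _ _ => rfl)
  obtain ⟨hmap, hh⟩ := injX.out (AddSubgroup.toIntSubmodule ρ.range).subtype
    (Submodule.injective_subtype _) ((v₀.comp e₂).toIntLinearMap)
  let v : M →+ X := hmap.toAddMonoidHom
  have key : ∀ a : A, v (ρ a) = mkX (emb a) := by
    intro a
    have := hh ⟨ρ a, AddMonoidHom.mem_range.mpr ⟨a, rfl⟩⟩
    simpa [v] using this.trans (key₀ a)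
  let Θ : E × M →+ X := (mkX.comp (AddMonoidHom.fst E M)) - (v.comp (AddMonoidHom.snd E M))
  let Dsub : AddSubgroup (E × M) := Θ.ker
  refine ⟨↥Dsub, inferInstance, AddMonoidHom.codRestrict (emb.prod ρ) _ (by
      intro a
      show Θ (emb a, ρ a) = 0
      simp only [Θ, AddMonoidHom.sub_apply, AddMonoidHom.comp_apply, AddMonoidHom.coe_fst,
        AddMonoidHom.coe_snd, AddMonoidHom.prod_apply]
      rw [key a, sub_self]),
    (AddMonoidHom.snd E M).comp Dsub.subtype, ?_, ?_, ?_, ?_⟩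
  · intro a b hab
    apply emb_inj
    exact congrArg (fun x => (x : E × M).1) (congrArg Subtype.val hab)
  · intro m
    obtain ⟨e, he⟩ := mkX_surj (v m)
    exact ⟨⟨(e, m), by show Θ (e, m) = 0; simp [Θ, he]⟩, rfl⟩
  · intro a; rfl
  · rintro ⟨⟨e, m⟩, hd⟩ hm
    have hm0 : m = 0 := hm
    have he : mkX e = 0 := by
      have : Θ (e, m) = 0 := hd
      simp only [Θ, AddMonoidHom.sub_apply, AddMonoidHom.comp_apply, AddMonoidHom.coe_fst,
        AddMonoidHom.coe_snd, sub_eq_zero] at this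
      rw [this, hm0, map_zero]
    rw [QuotientAddGroup.mk'_apply, QuotientAddGroup.eq_zero_iff] at he
    obtain ⟨a, ha, hae⟩ := he
    refine ⟨a, ?_⟩
    apply Subtype.ext
    show (emb a, ρ a) = (e, m)
    rw [hae, hm0, AddMonoidHom.mem_ker.mp ha]

theorem exists_mult_resolution {A M : Type u} [CommGroup A] [CommGroup M] (ρ : A →* M) :
    ∃ (D : Type u) (_ : CommGroup D) (f : A →* D) (θ : D →* M),
      Function.Injective f ∧ Function.Surjective θ ∧ (∀ a, θ (f a) = ρ a) ∧
      (∀ d, θ d = 1 → ∃ a, f a = d) := by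
  obtain ⟨D₀, _, f₀, θ₀, hfi, hts, hc, hk⟩ := exists_resolution (MonoidHom.toAdditive ρ)
  refine ⟨Multiplicative D₀, inferInstance,
    MonoidHom.mk' (fun a => Multiplicative.ofAdd (f₀ (Additive.ofMul a)))
      (fun a b => by simp [map_add]),
    MonoidHom.mk' (fun d => (θ₀ d.toAdd).toMul)
      (fun a b => by simp [map_add]), ?_, ?_, ?_, ?_⟩
  · intro a b hab
    simpa using hfi (show f₀ (Additive.ofMul a) = f₀ (Additive.ofMul b) from hab)
  · intro m
    obtain ⟨d, hd⟩ := hts (Additive.ofMul m)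
    exact ⟨Multiplicative.ofAdd d, congrArg Additive.toMul hd⟩
  · intro a
    exact congrArg Additive.toMul (hc (Additive.ofMul a))
  · intro d hd
    obtain ⟨a, ha⟩ := hk d.toAdd hd
    exact ⟨Additive.toMul a, congrArg Multiplicative.ofAdd ha⟩

open scoped IsMulCommutative in
set_option maxHeartbeats 1000000 in
theorem main_aux (G : Type u) [Group G] [Fintype G] :
    ∃ (H : Type u) (_ : Group H) (_ : Fintype H),
      Isoclinic G H ∧ Nat.card H ≤ Nat.card G ∧ Subgroup.center H ≤ commutator H := by
  classical
  set Z := Subgroup.center G with hZ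
  let M₀ := Abelianization G
  let π : G →* M₀ := Abelianization.of
  have hπker : ∀ g : G, π g = 1 ↔ g ∈ commutator G := fun g => QuotientGroup.eq_one_iff g
  let ρ : ↥Z →* M₀ := π.comp Z.subtype
  obtain ⟨D, _, f, θ, hfi, hts, hc, hk⟩ := exists_mult_resolution (A := ↥Z) (M := M₀) ρ
  -- the subgroup Y of G × D
  let Φ : G × D →* M₀ := (π.comp (MonoidHom.fst G D)) * (θ.comp (MonoidHom.snd G D))
  have hΦ : ∀ p : G × D, Φ p = π p.1 * θ p.2 := fun p => rfl
  let Y : Subgroup (G × D) := Φ.ker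
  have hY : ∀ p : G × D, p ∈ Y ↔ π p.1 * θ p.2 = 1 := fun p => Iff.rfl
  -- the central subgroup N
  let ν : ↥Z →* G × D := Z.subtype.prod f⁻¹
  have hν : ∀ a : ↥Z, ν a = ((a : G), (f a)⁻¹) := fun a => rfl
  have hν_inj : Function.Injective ν := fun a b hab => Subtype.ext (congrArg Prod.fst hab)
  have hνY : ∀ a : ↥Z, ν a ∈ Y := by
    intro a
    rw [hY]
    show π (a : G) * θ (f a)⁻¹ = 1
    rw [map_inv, hc a]
    show π (a : G) * (π (a : G))⁻¹ = 1
    group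
  -- elements of range ν are central in G × D
  have hνcent : ∀ a : ↥Z, ∀ p : G × D, p * ν a = ν a * p := by
    intro a p
    have h1 : p.1 * (a : G) = (a : G) * p.1 := Subgroup.mem_center_iff.mp a.2 p.1
    have h2 : p.2 * (f a)⁻¹ = (f a)⁻¹ * p.2 := mul_comm _ _
    exact Prod.ext h1 h2
  let N : Subgroup ↥Y := (ν.range).subgroupOf Y
  have hN : ∀ y : ↥Y, y ∈ N ↔ ∃ a : ↥Z, ν a = (y : G × D) := by
    intro y
    constructor
    · rintro ⟨a, ha⟩; exact ⟨a, ha⟩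
    · rintro ⟨a, ha⟩; exact ⟨a, ha⟩
  haveI hNnormal : N.Normal := by
    constructor
    intro n hn g
    rw [hN] at hn ⊢
    obtain ⟨a, ha⟩ := hn
    refine ⟨a, ?_⟩
    have hcomm := hνcent a (g : G × D)
    rw [ha] at hcomm
    rw [ha]
    push_cast
    rw [hcomm]
    group
  let H := ↥Y ⧸ N
  let mkH : ↥Y →* H := QuotientGroup.mk' N
  have mkH_surj : Function.Surjective mkH := QuotientGroup.mk'_surjective N
  -- projection to G
  let pr : ↥Y →* G := (MonoidHom.fst G D).comp Y.subtype
  have hpr : ∀ y : ↥Y, pr y = (y : G × D).1 := fun y => rfl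
  have hpr_surj : Function.Surjective pr := by
    intro g
    obtain ⟨d, hd⟩ := hts (π g)⁻¹
    refine ⟨⟨(g, d), ?_⟩, rfl⟩
    rw [hY]
    rw [hd]
    group
  -- finiteness
  have hkfst : ∀ k : ↥pr.ker, ((k : ↥Y) : G × D).1 = 1 := fun k => k.2
  have hksnd : ∀ k : ↥pr.ker, θ ((k : ↥Y) : G × D).2 = 1 := by
    intro k
    have h2 := (hY _).mp (k : ↥Y).2
    rw [hkfst k, map_one, one_mul] at h2
    exact h2
  have hker_inj : ∃ j : ↥pr.ker → ↥Z, Function.Injective j := by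
    refine ⟨fun k => Classical.choose (hk _ (hksnd k)), ?_⟩
    intro k₁ k₂ h12
    have e1 := Classical.choose_spec (hk _ (hksnd k₁))
    have e2 := Classical.choose_spec (hk _ (hksnd k₂))
    have hsnd : ((k₁ : ↥Y) : G × D).2 = ((k₂ : ↥Y) : G × D).2 := by
      rw [← e1, ← e2]; exact congrArg f h12
    have hfst : ((k₁ : ↥Y) : G × D).1 = ((k₂ : ↥Y) : G × D).1 := by
      rw [hkfst k₁, hkfst k₂]
    exact Subtype.ext (Subtype.ext (Prod.ext hfst hsnd))
  haveI : Finite ↥pr.ker := by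
    obtain ⟨j, hj⟩ := hker_inj
    exact Finite.of_injective j hj
  haveI : Finite (↥Y ⧸ pr.ker) :=
    Finite.of_injective _ (QuotientGroup.kerLift_injective pr)
  haveI hYfin : Finite ↥Y :=
    Finite.of_equiv _ (Subgroup.groupEquivQuotientProdSubgroup (s := pr.ker)).symm
  haveI hHfin : Finite H := Finite.of_surjective mkH mkH_surj
  -- cardinality
  have hcard : Nat.card H ≤ Nat.card G := by
    have c1 : Nat.card ↥Y = Nat.card H * Nat.card ↥N :=
      Subgroup.card_eq_card_quotient_mul_card_subgroup N
    have c2 : Nat.card ↥Y = Nat.card (↥Y ⧸ pr.ker) * Nat.card ↥pr.ker :=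
      Subgroup.card_eq_card_quotient_mul_card_subgroup pr.ker
    have c3 : Nat.card (↥Y ⧸ pr.ker) = Nat.card G := by
      apply Nat.card_eq_of_bijective (QuotientGroup.kerLift pr)
      exact ⟨QuotientGroup.kerLift_injective pr, by
        intro g
        obtain ⟨y, hy⟩ := hpr_surj g
        exact ⟨QuotientGroup.mk y, hy⟩⟩
    have c4 : Nat.card ↥N = Nat.card ↥Z := by
      have e : ↥N ≃* ↥ν.range := Subgroup.subgroupOfEquivOfLe (fun x hx => by
        obtain ⟨a, ha⟩ := hx; rw [← ha]; exact hνY a)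
      have e2 : ↥Z ≃* ↥ν.range := MonoidHom.ofInjective hν_inj
      rw [Nat.card_congr e.toEquiv, Nat.card_congr e2.toEquiv]
    have c5 : Nat.card ↥pr.ker ≤ Nat.card ↥Z := by
      obtain ⟨j, hj⟩ := hker_inj
      exact Nat.card_le_card_of_injective j hj
    have hZpos : 0 < Nat.card ↥Z := Nat.card_pos
    have : Nat.card H * Nat.card ↥Z = Nat.card G * Nat.card ↥pr.ker := by
      rw [← c4, ← c1, c2, c3]
    calc Nat.card H = Nat.card H * Nat.card ↥Z / Nat.card ↥Z := by
          rw [Nat.mul_div_cancel _ hZpos]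
      _ = Nat.card G * Nat.card ↥pr.ker / Nat.card ↥Z := by rw [this]
      _ ≤ Nat.card G * Nat.card ↥Z / Nat.card ↥Z :=
          Nat.div_le_div_right (Nat.mul_le_mul_left _ c5)
      _ = Nat.card G := Nat.mul_div_cancel _ hZpos
  -- the homomorphism ω from commutator G to H
  have hωmem : ∀ c : G, c ∈ commutator G → (c, (1 : D)) ∈ Y := by
    intro c hc'
    rw [hY]
    show π c * θ 1 = 1
    rw [map_one, mul_one, (hπker c).mpr hc']
  let ω₀ : ↥(commutator G) →* ↥Y :=
    MonoidHom.codRestrict ((commutator G).subtype.prod 1) Y (fun c => hωmem c c.2)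
  let ω : ↥(commutator G) →* H := mkH.comp ω₀
  have hω : ∀ (c : G) (hc' : c ∈ commutator G),
      ω ⟨c, hc'⟩ = mkH ⟨(c, 1), hωmem c hc'⟩ := fun _ _ => rfl
  have hYcomm : ∀ y₁ y₂ : ↥Y,
      ((⁅y₁, y₂⁆ : ↥Y) : G × D) = (⁅(y₁ : G × D).1, (y₂ : G × D).1⁆, 1) := by
    intro y₁ y₂
    have h1 : ((⁅y₁, y₂⁆ : ↥Y) : G × D) = ⁅(y₁ : G × D), (y₂ : G × D)⁆ := rfl
    rw [h1]
    have h2 : ⁅(y₁ : G × D), (y₂ : G × D)⁆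
        = (⁅(y₁ : G × D).1, (y₂ : G × D).1⁆, ⁅(y₁ : G × D).2, (y₂ : G × D).2⁆) := rfl
    rw [h2]
    exact Prod.ext rfl (commutatorElement_eq_one_iff_mul_comm.mpr (mul_comm _ _))
  have hmemYc : ∀ y₁ y₂ : ↥Y, ⁅(y₁ : G × D).1, (y₂ : G × D).1⁆ ∈ commutator G :=
    fun y₁ y₂ => Subgroup.commutator_mem_commutator (Subgroup.mem_top _) (Subgroup.mem_top _)
  have hcommH : ∀ y₁ y₂ : ↥Y, ⁅mkH y₁, mkH y₂⁆
      = ω ⟨⁅(y₁ : G × D).1, (y₂ : G × D).1⁆, hmemYc y₁ y₂⟩ := by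
    intro y₁ y₂
    rw [← map_commutatorElement, hω]
    exact congrArg mkH (Subtype.ext (hYcomm y₁ y₂))
  -- range of ω is the commutator subgroup of H
  have hrange : ω.range = commutator H := by
    apply le_antisymm
    · rintro x ⟨c, rfl⟩
      have main : ∀ (x : G), x ∈ Subgroup.closure (commutatorSet G) →
          ∀ hx' : x ∈ commutator G, ω ⟨x, hx'⟩ ∈ commutator H := by
        intro x hx
        refine Subgroup.closure_induction
          (p := fun x _ => ∀ hx' : x ∈ commutator G, ω ⟨x, hx'⟩ ∈ commutator H)
          ?_ ?_ ?_ ?_ hx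
        · rintro _ ⟨g₁, g₂, rfl⟩ hx'
          obtain ⟨y₁, hy₁⟩ := hpr_surj g₁
          obtain ⟨y₂, hy₂⟩ := hpr_surj g₂
          have : ω ⟨⁅g₁, g₂⁆, hx'⟩ = ⁅mkH y₁, mkH y₂⁆ := by
            rw [hcommH y₁ y₂]
            congr 1
            refine Subtype.ext ?_
            show ⁅g₁, g₂⁆ = ⁅(y₁ : G × D).1, (y₂ : G × D).1⁆
            rw [← hy₁, ← hy₂]
            rfl
          rw [this]
          exact Subgroup.commutator_mem_commutator (Subgroup.mem_top _) (Subgroup.mem_top _)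
        · intro hx'
          have : (⟨1, hx'⟩ : ↥(commutator G)) = 1 := rfl
          rw [this, map_one]
          exact Subgroup.one_mem _
        · intro x y hxc hyc ihx ihy hxy'
          have hx' : x ∈ commutator G := (commutator_eq_closure G).symm ▸ hxc
          have hy' : y ∈ commutator G := (commutator_eq_closure G).symm ▸ hyc
          have : (⟨x * y, hxy'⟩ : ↥(commutator G)) = ⟨x, hx'⟩ * ⟨y, hy'⟩ := rfl
          rw [this, map_mul]
          exact Subgroup.mul_mem _ (ihx hx') (ihy hy')
        · intro x hxc ihx hxinv'
          have hx' : x ∈ commutator G := (commutator_eq_closure G).symm ▸ hxc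
          have : (⟨x⁻¹, hxinv'⟩ : ↥(commutator G)) = (⟨x, hx'⟩)⁻¹ := rfl
          rw [this, map_inv]
          exact Subgroup.inv_mem _ (ihx hx')
      have hcc : (c : G) ∈ Subgroup.closure (commutatorSet G) :=
        (commutator_eq_closure G) ▸ c.2
      exact main (c : G) hcc c.2
    · show commutator H ≤ ω.range
      rw [commutator_def]
      rw [Subgroup.commutator_le]
      intro h₁ _ h₂ _
      obtain ⟨y₁, rfl⟩ := mkH_surj h₁
      obtain ⟨y₂, rfl⟩ := mkH_surj h₂
      rw [hcommH y₁ y₂]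
      exact ⟨_, rfl⟩
  -- central elements of H have central first component
  have hcent_fst : ∀ y : ↥Y, mkH y ∈ Subgroup.center H → (y : G × D).1 ∈ Z := by
    intro y hy
    rw [hZ, Subgroup.mem_center_iff]
    intro x
    obtain ⟨yx, hyx⟩ := hpr_surj x
    have hcomm1 : ⁅mkH y, mkH yx⁆ = 1 :=
      commutatorElement_eq_one_iff_mul_comm.mpr
        (Subgroup.mem_center_iff.mp hy (mkH yx)).symm
    rw [← map_commutatorElement] at hcomm1
    have hmemN : ⁅y, yx⁆ ∈ N := (QuotientGroup.eq_one_iff _).mp hcomm1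
    rw [hN] at hmemN
    obtain ⟨a, ha⟩ := hmemN
    rw [hYcomm] at ha
    have h1 : (a : G) = ⁅(y : G × D).1, (yx : G × D).1⁆ := congrArg Prod.fst ha
    have h2 : (f a)⁻¹ = (1 : D) := congrArg Prod.snd ha
    have ha1 : a = 1 := hfi (by rw [inv_eq_one] at h2; rw [h2, map_one])
    have : ⁅(y : G × D).1, (yx : G × D).1⁆ = 1 := by rw [← h1, ha1]; rfl
    have hcm := commutatorElement_eq_one_iff_mul_comm.mp this
    rw [← hyx, hpr]
    exact hcm.symm
  -- the center of H is contained in the commutator subgroup of H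
  have hstem : Subgroup.center H ≤ commutator H := by
    intro h hh
    obtain ⟨y, rfl⟩ := mkH_surj h
    have hg : (y : G × D).1 ∈ Z := hcent_fst y hh
    have hθe : θ (f ⟨(y : G × D).1, hg⟩ * (y : G × D).2) = 1 := by
      rw [map_mul, hc ⟨(y : G × D).1, hg⟩]
      exact (hY _).mp y.2
    obtain ⟨a, ha⟩ := hk _ hθe
    have haC : (a : G) ∈ commutator G := by
      rw [← hπker]
      show ρ a = 1
      rw [← hc a, ha, hθe]
    have hbval : f (⟨(y : G × D).1, hg⟩⁻¹ * a) = (y : G × D).2 := by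
      rw [map_mul, ha, map_inv]
      group
    have key : mkH y = ω ⟨(a : G), haC⟩ := by
      rw [hω]
      apply (QuotientGroup.mk'_eq_mk' N).mpr
      refine ⟨y⁻¹ * ⟨((a : G), 1), hωmem _ haC⟩, ?_, by group⟩
      rw [hN]
      refine ⟨⟨(y : G × D).1, hg⟩⁻¹ * a, ?_⟩
      rw [hν]
      have hco : (↑(y⁻¹ * ⟨((a : G), 1), hωmem _ haC⟩) : G × D)
          = (((y : G × D).1)⁻¹ * (a : G), ((y : G × D).2)⁻¹ * 1) := rfl
      rw [hco, hbval, mul_one]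
      rfl
    rw [key, ← hrange]
    exact ⟨_, rfl⟩
  -- construction of φ
  let χ : ↥Y →* G ⧸ Z := (QuotientGroup.mk' Z).comp pr
  have hχ : ∀ y : ↥Y, χ y = QuotientGroup.mk (pr y) := fun y => rfl
  let χbar : H →* G ⧸ Z := QuotientGroup.lift N χ (by
    intro y hy
    rw [hN] at hy
    obtain ⟨a, ha⟩ := hy
    have h1 : pr y = (a : G) := by rw [hpr, ← ha]; rfl
    show QuotientGroup.mk (pr y) = 1
    rw [h1, QuotientGroup.eq_one_iff]
    exact a.2)
  have hχbar : ∀ y : ↥Y, χbar (mkH y) = QuotientGroup.mk (pr y) := fun y => rfl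
  have hχbar_surj : Function.Surjective χbar := by
    intro q
    obtain ⟨g, rfl⟩ := QuotientGroup.mk_surjective q
    obtain ⟨y, hy⟩ := hpr_surj g
    exact ⟨mkH y, by rw [hχbar, hy]⟩
  have hkerχ : Subgroup.center H = χbar.ker := by
    ext h
    constructor
    · intro hc'
      obtain ⟨y, rfl⟩ := mkH_surj h
      have hg : (y : G × D).1 ∈ Z := hcent_fst y hc'
      rw [MonoidHom.mem_ker, hχbar, hpr, QuotientGroup.eq_one_iff]
      exact hg
    · intro hk'
      obtain ⟨y, rfl⟩ := mkH_surj h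
      rw [MonoidHom.mem_ker, hχbar, QuotientGroup.eq_one_iff] at hk'
      rw [Subgroup.mem_center_iff]
      intro h'
      obtain ⟨y', rfl⟩ := mkH_surj h'
      rw [← map_mul, ← map_mul]
      apply congrArg mkH
      apply Subtype.ext
      apply Prod.ext
      · exact Subgroup.mem_center_iff.mp hk' _
      · exact mul_comm _ _
  let Ξ : H ⧸ Subgroup.center H ≃* G ⧸ Z :=
    (QuotientGroup.quotientMulEquivOfEq hkerχ).trans
      (QuotientGroup.quotientKerEquivOfSurjective χbar hχbar_surj)
  have hΞ : ∀ y : ↥Y, Ξ (QuotientGroup.mk (mkH y)) = QuotientGroup.mk (pr y) := by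
    intro y
    rfl
  -- ψ
  have hω_inj : Function.Injective ω := by
    rw [injective_iff_map_eq_one]
    intro c hc1
    have hcn : ω₀ c ∈ N := (QuotientGroup.eq_one_iff _).mp hc1
    rw [hN] at hcn
    obtain ⟨a, ha⟩ := hcn
    have h1 : (a : G) = (c : G) := congrArg Prod.fst ha
    have h2 : (f a)⁻¹ = (1 : D) := congrArg Prod.snd ha
    have ha1 : a = 1 := hfi (by rw [inv_eq_one] at h2; rw [h2, map_one])
    apply Subtype.ext
    rw [← h1, ha1]
    rfl
  let ω' : ↥(commutator G) →* ↥(commutator H) :=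
    ω.codRestrict (commutator H) (fun c => hrange ▸ ⟨c, rfl⟩)
  have hω'bij : Function.Bijective ω' := by
    constructor
    · intro a b hab
      exact hω_inj (congrArg Subtype.val hab)
    · rintro ⟨x, hx⟩
      rw [← hrange] at hx
      obtain ⟨c, hc'⟩ := hx
      exact ⟨c, Subtype.ext hc'⟩
  refine ⟨H, inferInstance, Fintype.ofFinite H, ⟨Ξ.symm, MulEquiv.ofBijective ω' hω'bij, ?_⟩,
    hcard, hstem⟩
  intro g₁ g₂ h₁ h₂ he₁ he₂ hmem
  obtain ⟨y₁, rfl⟩ := mkH_surj h₁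
  obtain ⟨y₂, rfl⟩ := mkH_surj h₂
  have hg₁ : (g₁ : G ⧸ Z) = QuotientGroup.mk (pr y₁) := by
    rw [← hΞ y₁, ← he₁, MulEquiv.apply_symm_apply]
  have hg₂ : (g₂ : G ⧸ Z) = QuotientGroup.mk (pr y₂) := by
    rw [← hΞ y₂, ← he₂, MulEquiv.apply_symm_apply]
  rw [QuotientGroup.eq] at hg₁ hg₂
  have hy₁ : pr y₁ = g₁ * (g₁⁻¹ * pr y₁) := by group
  have hy₂ : pr y₂ = g₂ * (g₂⁻¹ * pr y₂) := by group
  have goal2 : ⁅mkH y₁, mkH y₂⁆ = ω ⟨⁅g₁, g₂⁆, hmem⟩ := by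
    rw [hcommH y₁ y₂]
    apply congrArg ω
    apply Subtype.ext
    show ⁅(y₁ : G × D).1, (y₂ : G × D).1⁆ = ⁅g₁, g₂⁆
    have e1 : (y₁ : G × D).1 = pr y₁ := rfl
    have e2 : (y₂ : G × D).1 = pr y₂ := rfl
    rw [e1, e2, hy₁, hy₂]
    exact comm_central _ _ _ _ hg₁ hg₂
  exact goal2.symm




end IsoclinicAux

/-- Every finite group `G` is isoclinic to a finite group `H` with `|H| ≤ |G|` whose
center is contained in its derived subgroup. -/
theorem exists_isoclinic_stem (G : Type*) [Group G] [Fintype G] :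
    ∃ (H : Type) (_ : Group H) (_ : Fintype H),
      Isoclinic G H ∧ Nat.card H ≤ Nat.card G ∧ Subgroup.center H ≤ commutator H := by
  obtain ⟨K, _, _, hIso, hcard, hstem⟩ := IsoclinicAux.main_aux G
  haveI : Small.{0} K := inferInstance
  let e : Shrink.{0} K ≃ K := (equivShrink K).symm
  letI : Group (Shrink.{0} K) := e.group
  let me : Shrink.{0} K ≃* K := e.mulEquiv
  haveI : Finite (Shrink.{0} K) := Finite.of_equiv K e.symm
  refine ⟨Shrink.{0} K, inferInstance, Fintype.ofFinite _, ?_, ?_, ?_⟩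
  · exact IsoclinicAux.isoclinic_trans hIso (IsoclinicAux.isoclinic_of_mulEquiv me.symm)
  · calc Nat.card (Shrink.{0} K) = Nat.card K := Nat.card_congr e
      _ ≤ Nat.card G := hcard
  · intro x hx
    have h1 : me x ∈ Subgroup.center K := by
      rw [← IsoclinicAux.map_center_eq me]
      exact ⟨x, hx, rfl⟩
    have h2 : me x ∈ commutator K := hstem h1
    rw [← IsoclinicAux.map_commutator_eq me] at h2
    obtain ⟨c, hc, hcx⟩ := h2
    have := me.injective hcx
    rwa [← this]
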